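/- arXiv:2401.17757 — 3 statements merged into one kernel-verified Lean document; each statement's English description precedes it below -/
import Mathlib

section
/- Let A = Q Λ Qᵀ ∈ ℝ^{n×n} be symmetric, where Q is orthogonal and Λ = diag(λ_1,…,λ_n) with λ_1 ≤ … ≤ λ_n symmetric about λ̄ (λ_j + λ_{n+1−j} = 2λ̄ for all j). Let v ∈ ℝ^n be a unit vector such that μ = Qᵀ v is an absolute palindrome. Suppose m ≤ n and that unit vectors v_1,…,v_m ∈ ℝ^n, reals α_1,…,α_m, and positive reals β_1,…,β_{m−1} satisfy the Lanczos recurrence: v_1 = v; α_k = v_kᵀ A v_k for k = 1,…,m; u_2 = A v_1 − α_1 v_1 and u_{k+1} = A v_k − α_k v_k − β_{k−1} v_{k−1} for k = 2,…,m−1; β_k = ‖u_{k+1}‖₂ ≠ 0 and v_{k+1} = u_{k+1}/β_k for k = 1,…,m−1. Then α_k = λ̄ for every k = 1,…,m; i.e., the Jacobi matrix T_m generated by the m-step Lanczos iteration has constant diagonal entries λ̄. -/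
open Matrix

/-- A vector `w ∈ ℝ^n` is an absolute palindrome if `|w_i| = |w_{n+1-i}|`
(0-based: `|w i| = |w i.rev|`). -/
def AbsPalindrome {n : ℕ} (w : Fin n → ℝ) : Prop :=
  ∀ i : Fin n, |w i| = |w i.rev|

lemma exists_R (n : ℕ) (Q : Matrix (Fin n) (Fin n) ℝ) (hQ : Qᵀ * Q = 1)
    (lam : Fin n → ℝ) (lamBar : ℝ)
    (hsym : ∀ j : Fin n, lam j + lam j.rev = 2 * lamBar)
    (v : Fin n → ℝ) (hpal : AbsPalindrome (Qᵀ.mulVec v)) :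
    ∃ R : Matrix (Fin n) (Fin n) ℝ, Rᵀ * R = 1 ∧ R.mulVec v = v ∧
      (Q * Matrix.diagonal lam * Qᵀ) * R + R * (Q * Matrix.diagonal lam * Qᵀ)
        = (2 * lamBar) • R := by
  set μ := Qᵀ.mulVec v with hμ
  set s : Fin n → ℝ := fun i => if μ i.rev = 0 then 1 else μ i / μ i.rev with hs
  have hQQt : Q * Qᵀ = 1 := mul_eq_one_comm.mp hQ
  have hs_sq : ∀ i, s i ^ 2 = 1 := by
    intro i
    by_cases h : μ i.rev = 0
    · simp [hs, h]
    · have habs : |μ i| = |μ i.rev| := hpal i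
      have hsq : (μ i)^2 = (μ i.rev)^2 := by
        rw [← sq_abs (μ i), ← sq_abs (μ i.rev), habs]
      simp only [hs, if_neg h]
      rw [div_pow, hsq, div_self (pow_ne_zero 2 h)]
  have hs_mul : ∀ i, s i * μ i.rev = μ i := by
    intro i
    by_cases h : μ i.rev = 0
    · have habs : |μ i| = |μ i.rev| := hpal i
      rw [h, abs_zero, abs_eq_zero] at habs
      simp [hs, h, habs]
    · simp only [hs, if_neg h]
      exact div_mul_cancel₀ _ h
  set P : Matrix (Fin n) (Fin n) ℝ :=
    Matrix.of (fun i j => if j = i.rev then s i else 0) with hP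
  have hPtP : Pᵀ * P = 1 := by
    ext i j
    rw [Matrix.mul_apply]
    rw [Finset.sum_eq_single i.rev]
    · simp only [hP, Matrix.transpose_apply, Matrix.of_apply, Fin.rev_rev]
      by_cases hij : i = j
      · subst hij
        simp [sq] at hs_sq
        simp [hs_sq i.rev]
      · simp [hij, Ne.symm hij, Matrix.one_apply_ne hij]
    · intro k _ hk
      have : i ≠ k.rev := fun h => hk (by rw [h, Fin.rev_rev])
      simp [hP, this]
    · simp
  have hPμ : P.mulVec μ = μ := by
    funext i
    rw [Matrix.mulVec, dotProduct]
    rw [Finset.sum_eq_single i.rev]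
    · simpa [hP] using hs_mul i
    · intro k _ hk
      simp [hP, hk]
    · simp
  have hPval : ∀ i : Fin n, P i i.rev = s i := fun i => if_pos rfl
  have hPval0 : ∀ i j : Fin n, j ≠ i.rev → P i j = 0 := fun i j h => if_neg h
  have hΛP : Matrix.diagonal lam * P + P * Matrix.diagonal lam = (2 * lamBar) • P := by
    ext i j
    rw [Matrix.add_apply, Matrix.diagonal_mul, Matrix.mul_diagonal,
      Matrix.smul_apply, smul_eq_mul]
    by_cases hij : j = i.rev
    · subst hij
      rw [hPval]
      linear_combination s i * hsym i
    · rw [hPval0 i j hij]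
      ring
  refine ⟨Q * P * Qᵀ, ?_, ?_, ?_⟩
  · calc (Q * P * Qᵀ)ᵀ * (Q * P * Qᵀ) = Q * (Pᵀ * (Qᵀ * Q) * P) * Qᵀ := by
          simp [Matrix.transpose_mul, Matrix.mul_assoc]
    _ = 1 := by rw [hQ, Matrix.mul_one, hPtP, Matrix.mul_one, hQQt]
  · calc (Q * P * Qᵀ).mulVec v = Q.mulVec (P.mulVec (Qᵀ.mulVec v)) := by
          rw [← Matrix.mulVec_mulVec, ← Matrix.mulVec_mulVec]
    _ = Q.mulVec (Qᵀ.mulVec v) := by rw [← hμ, hPμ, hμ]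
    _ = v := by rw [Matrix.mulVec_mulVec, hQQt, Matrix.one_mulVec]
  · calc (Q * Matrix.diagonal lam * Qᵀ) * (Q * P * Qᵀ)
          + (Q * P * Qᵀ) * (Q * Matrix.diagonal lam * Qᵀ)
        = Q * (Matrix.diagonal lam * (Qᵀ * Q) * P) * Qᵀ
          + Q * (P * (Qᵀ * Q) * Matrix.diagonal lam) * Qᵀ := by
          simp only [Matrix.mul_assoc]
    _ = Q * (Matrix.diagonal lam * P + P * Matrix.diagonal lam) * Qᵀ := by
          rw [hQ, Matrix.mul_one, Matrix.mul_one, Matrix.mul_add, Matrix.add_mul]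
    _ = (2 * lamBar) • (Q * P * Qᵀ) := by
          rw [hΛP, Matrix.mul_smul, Matrix.smul_mul]

lemma alpha_lam (n : ℕ) (A R : Matrix (Fin n) (Fin n) ℝ) (lamBar : ℝ)
    (hRtR : Rᵀ * R = 1)
    (hAR : A * R + R * A = (2 * lamBar) • R)
    (w : Fin n → ℝ) (hw : w ⬝ᵥ w = 1) (ε : ℝ) (hε : ε ^ 2 = 1)
    (hRw : R *ᵥ w = ε • w) : w ⬝ᵥ A *ᵥ w = lamBar := by
  have hdot : ∀ x y : Fin n → ℝ, (R *ᵥ x) ⬝ᵥ (R *ᵥ y) = x ⬝ᵥ y := by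
    intro x y
    calc (R *ᵥ x) ⬝ᵥ (R *ᵥ y) = x ⬝ᵥ ((Rᵀ * R) *ᵥ y) := by
          rw [← Matrix.mulVec_mulVec, Matrix.dotProduct_mulVec x, Matrix.vecMul_transpose]
      _ = x ⬝ᵥ y := by rw [hRtR, Matrix.one_mulVec]
  have hARv : A *ᵥ (R *ᵥ w) = (2 * lamBar) • (R *ᵥ w) - R *ᵥ (A *ᵥ w) := by
    have h := congrFun (congrArg Matrix.mulVec hAR) w
    simp only [Matrix.add_mulVec, Matrix.smul_mulVec, ← Matrix.mulVec_mulVec] at h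
    exact eq_sub_of_add_eq h
  have e1 : (R *ᵥ w) ⬝ᵥ (A *ᵥ (R *ᵥ w)) = w ⬝ᵥ A *ᵥ w := by
    rw [hRw, Matrix.mulVec_smul, smul_dotProduct, dotProduct_smul]
    have h2 : ε • (ε • (w ⬝ᵥ A *ᵥ w)) = ε ^ 2 * (w ⬝ᵥ A *ᵥ w) := by
      simp [smul_eq_mul]; ring
    rw [h2, hε, one_mul]
  have e2 : (R *ᵥ w) ⬝ᵥ (A *ᵥ (R *ᵥ w)) = 2 * lamBar - w ⬝ᵥ A *ᵥ w := by
    rw [hARv, dotProduct_sub, dotProduct_smul, hdot, hdot, hw, smul_eq_mul, mul_one]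
  have := e1.symm.trans e2
  linarith

/-- If `A = QΛQᵀ` has eigenvalues symmetric about `λ̄` and the starting unit
vector `v` is such that `μ = Qᵀv` is an absolute palindrome, then all the
diagonal entries `α_k` of the Jacobi matrix generated by the `m`-step Lanczos
iteration equal `λ̄`. -/
theorem stmt11 (n m : ℕ) (hm : 1 ≤ m) (hmn : m ≤ n)
    (Q : Matrix (Fin n) (Fin n) ℝ) (hQ : Qᵀ * Q = 1)
    (lam : Fin n → ℝ) (hmono : Monotone lam)
    (lamBar : ℝ) (hsym : ∀ j : Fin n, lam j + lam j.rev = 2 * lamBar)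
    (A : Matrix (Fin n) (Fin n) ℝ) (hA : A = Q * Matrix.diagonal lam * Qᵀ)
    (v : Fin n → ℝ) (hv : v ⬝ᵥ v = 1)
    (hpal : AbsPalindrome (Qᵀ.mulVec v))
    -- the Lanczos recurrence (1-based indexing `k = 1, …, m`)
    (vv u : ℕ → Fin n → ℝ) (a b : ℕ → ℝ)
    (hv1 : vv 1 = v)
    (hunit : ∀ k, 1 ≤ k → k ≤ m → vv k ⬝ᵥ vv k = 1)
    (ha : ∀ k, 1 ≤ k → k ≤ m → a k = vv k ⬝ᵥ A.mulVec (vv k))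
    (hu2 : u 2 = A.mulVec (vv 1) - a 1 • vv 1)
    (hu : ∀ k, 2 ≤ k → k + 1 ≤ m →
      u (k + 1) = A.mulVec (vv k) - a k • vv k - b (k - 1) • vv (k - 1))
    (hb : ∀ k, 1 ≤ k → k + 1 ≤ m → b k = Real.sqrt (u (k + 1) ⬝ᵥ u (k + 1)))
    (hbne : ∀ k, 1 ≤ k → k + 1 ≤ m → b k ≠ 0)
    (hbpos : ∀ k, 1 ≤ k → k + 1 ≤ m → 0 < b k)
    (hvk : ∀ k, 1 ≤ k → k + 1 ≤ m → vv (k + 1) = (b k)⁻¹ • u (k + 1)) :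
    ∀ k, 1 ≤ k → k ≤ m → a k = lamBar := by
  obtain ⟨R, hRtR, hRv, hAR⟩ := exists_R n Q hQ lam lamBar hsym v hpal
  rw [← hA] at hAR
  have hARv : ∀ x, R *ᵥ (A *ᵥ x) = (2 * lamBar) • (R *ᵥ x) - A *ᵥ (R *ᵥ x) := by
    intro x
    have h := congrFun (congrArg Matrix.mulVec hAR) x
    simp only [Matrix.add_mulVec, Matrix.smul_mulVec, ← Matrix.mulVec_mulVec] at h
    exact eq_sub_of_add_eq' h
  have hsq : ∀ j : ℕ, ((-1 : ℝ) ^ j) ^ 2 = 1 := by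
    intro j
    rw [← pow_mul, mul_comm, pow_mul, neg_one_sq, one_pow]
  have halpha : ∀ k, 1 ≤ k → k ≤ m → ∀ ε : ℝ, ε ^ 2 = 1 →
      R *ᵥ vv k = ε • vv k → a k = lamBar := by
    intro k hk1 hk2 ε hε hRw
    rw [ha k hk1 hk2]
    exact alpha_lam n A R lamBar hRtR hAR (vv k) (hunit k hk1 hk2) ε hε hRw
  have key : ∀ k, 1 ≤ k → k ≤ m → R *ᵥ vv k = ((-1 : ℝ) ^ (k - 1)) • vv k := by
    intro k
    induction k using Nat.strong_induction_on with
    | _ k ih =>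
      rcases k with _ | _ | _ | j
      · intro h; omega
      · intro _ _
        simpa [hv1] using hRv
      · intro _ h2m
        have h1 : R *ᵥ vv 1 = ((-1 : ℝ) ^ (1 - 1)) • vv 1 := ih 1 (by omega) (by omega) (by omega)
        simp only [Nat.sub_self, pow_zero, one_smul] at h1
        have ha1 : a 1 = lamBar :=
          halpha 1 (by omega) (by omega) 1 (by norm_num) (by rw [h1, one_smul])
        have hv2 : vv 2 = (b 1)⁻¹ • u 2 := hvk 1 le_rfl h2m
        have hu2R : R *ᵥ u 2 = (-1 : ℝ) • u 2 := by
          rw [hu2, ha1, Matrix.mulVec_sub, Matrix.mulVec_smul, hARv (vv 1), h1]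
          module
        rw [hv2, Matrix.mulVec_smul, hu2R, smul_comm]
        norm_num
      · intro _ hkm
        have ihp : R *ᵥ vv (j + 2) = ((-1 : ℝ) ^ (j + 1)) • vv (j + 2) := by
          have := ih (j + 2) (by omega) (by omega) (by omega)
          simpa using this
        have ihp1 : R *ᵥ vv (j + 1) = ((-1 : ℝ) ^ j) • vv (j + 1) := by
          have := ih (j + 1) (by omega) (by omega) (by omega)
          simpa using this
        have hap : a (j + 2) = lamBar :=
          halpha (j + 2) (by omega) (by omega) _ (hsq (j + 1)) ihp
        have huf : u (j + 3) = A *ᵥ vv (j + 2) - lamBar • vv (j + 2) - b (j + 1) • vv (j + 1) := by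
          have h := hu (j + 2) (by omega) (by omega)
          simpa [hap] using h
        have hvf : vv (j + 3) = (b (j + 2))⁻¹ • u (j + 3) := hvk (j + 2) (by omega) (by omega)
        have huR : R *ᵥ u (j + 3) = (-((-1 : ℝ) ^ (j + 1))) • u (j + 3) := by
          rw [huf, Matrix.mulVec_sub, Matrix.mulVec_sub, Matrix.mulVec_smul, Matrix.mulVec_smul,
            hARv (vv (j + 2)), ihp, ihp1]
          simp only [pow_succ, Matrix.mulVec_smul]
          generalize (-1 : ℝ) ^ j = ε
          module
        have : R *ᵥ vv (j + 3) = (-((-1 : ℝ) ^ (j + 1))) • vv (j + 3) := by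
          rw [hvf, Matrix.mulVec_smul, huR, smul_comm]
        rw [this]
        congr 1
        simp [pow_succ]
  intro k hk1 hk2
  exact halpha k hk1 hk2 _ (hsq (k - 1)) (key k hk1 hk2)
end

section
/- Let A = Q Λ Qᵀ ∈ ℝ^{n×n} be symmetric, where Q is orthogonal and Λ = diag(λ_1,…,λ_n) with λ_1 ≤ … ≤ λ_n symmetric about λ̄ (λ_j + λ_{n+1−j} = 2λ̄ for all j). Let v ∈ ℝ^n be a unit vector such that μ = Qᵀ v is an absolute palindrome. Let m ≤ n and let T_m ∈ ℝ^{m×m} be the Jacobi matrix produced by the m-step Lanczos method applied to A with starting vector v (assuming all β_1,…,β_{m−1} are nonzero). Then the m Ritz values (eigenvalues of T_m) are symmetric about λ̄, and the quadrature weights corresponding to pairs of symmetric quadrature nodes are equal: there is an ordering θ_1 ≤ … ≤ θ_m of the eigenvalues of T_m with corresponding orthonormal eigenvectors w_1,…,w_m such that θ_k + θ_{m+1−k} = 2λ̄ and ((w_k)_1)² = ((w_{m+1−k})_1)² for all k = 1,…,m. -/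
open Matrix

lemma tridiag_zero {m : ℕ} (hm : 1 ≤ m) (T : Matrix (Fin m) (Fin m) ℝ)
    (hoff : ∀ i j : Fin m, (i:ℕ)+1 < (j:ℕ) → T i j = 0)
    (hsup : ∀ i j : Fin m, (i:ℕ)+1 = (j:ℕ) → T i j ≠ 0)
    (θ : ℝ) (w : Fin m → ℝ) (hw : T.mulVec w = θ • w) (h0 : w ⟨0, hm⟩ = 0) :
    w = 0 := by
  have key : ∀ N : ℕ, ∀ i : Fin m, (i:ℕ) ≤ N → w i = 0 := by
    intro N
    induction N with
    | zero =>
      intro i hi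
      have : i = ⟨0, hm⟩ := Fin.ext (Nat.le_zero.mp hi)
      rwa [this]
    | succ N ih =>
      intro i hi
      rcases Nat.lt_or_ge (i:ℕ) (N+1) with h | h
      · exact ih i (Nat.lt_succ_iff.mp h)
      · have hiN : (i:ℕ) = N+1 := le_antisymm hi h
        have hNm : N < m := by have := i.isLt; omega
        set p : Fin m := ⟨N, hNm⟩ with hp
        have hrow : (T.mulVec w) p = θ * w p := by rw [hw]; rfl
        have hwp : w p = 0 := ih p (le_refl N)
        have hsum : (T.mulVec w) p = T p i * w i := by
          rw [Matrix.mulVec, dotProduct]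
          apply Finset.sum_eq_single i
          · intro j _ hj
            rcases Nat.lt_trichotomy (j:ℕ) (N+1) with hlt | heq | hgt
            · rw [ih j (Nat.lt_succ_iff.mp hlt), mul_zero]
            · exact absurd (Fin.ext (heq.trans hiN.symm) : j = i) hj
            · rw [hoff p j hgt, zero_mul]
          · intro hi'; exact absurd (Finset.mem_univ i) hi'
        have h2 : T p i * w i = 0 := by rw [← hsum, hrow, hwp, mul_zero]
        exact (mul_eq_zero.mp h2).resolve_left (hsup p i hiN.symm)
  funext i
  exact key m i (le_of_lt i.isLt)

lemma jacobi_sym {m : ℕ} (hm : 1 ≤ m) (lamBar : ℝ) (T : Matrix (Fin m) (Fin m) ℝ)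
    (hoff : ∀ i j : Fin m, (i:ℕ)+1 < (j:ℕ) → T i j = 0)
    (hsup : ∀ i j : Fin m, (i:ℕ)+1 = (j:ℕ) → T i j ≠ 0)
    (hsymT : Tᵀ = T)
    (hdiagT : ∀ i : Fin m, T i i = lamBar) :
    ∃ (θ : Fin m → ℝ) (w : Fin m → Fin m → ℝ),
      Monotone θ ∧
      (∀ k : Fin m, T.mulVec (w k) = θ k • w k) ∧
      (∀ k l : Fin m, w k ⬝ᵥ w l = if k = l then 1 else 0) ∧
      (∀ k : Fin m, θ k + θ k.rev = 2 * lamBar ∧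
        (w k ⟨0, hm⟩) ^ 2 = (w k.rev ⟨0, hm⟩) ^ 2) := by
  classical
  have hH : T.IsHermitian := by
    unfold Matrix.IsHermitian
    rw [Matrix.conjTranspose]
    exact (Matrix.conjTranspose_eq_transpose_of_trivial T).trans hsymT
  set f : Fin m → Fin m → ℝ :=
    fun i => (WithLp.equiv 2 (Fin m → ℝ)) (hH.eigenvectorBasis i) with hf
  set μ : Fin m → ℝ := hH.eigenvalues with hμ
  have heig : ∀ i, T.mulVec (f i) = μ i • f i := fun i => hH.mulVec_eigenvectorBasis i
  -- orthonormality in dot-product form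
  have hON : ∀ i j, f i ⬝ᵥ f j = if i = j then 1 else 0 := by
    intro i j
    have := (orthonormal_iff_ite.mp hH.eigenvectorBasis.orthonormal) i j
    rw [PiLp.inner_apply] at this
    simpa [dotProduct, hf, mul_comm] using this
  -- eigenvectors have nonzero first component
  have hfirst : ∀ (ρ : ℝ) (x : Fin m → ℝ), T.mulVec x = ρ • x → x ≠ 0 → x ⟨0, hm⟩ ≠ 0 := by
    intro ρ x hx hxne h0
    exact hxne (tridiag_zero hm T hoff hsup ρ x hx h0)
  have hfne : ∀ i, f i ≠ 0 := by
    intro i hzero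
    have := hON i i
    rw [hzero] at this
    simp at this
  -- μ is injective
  have hμinj : Function.Injective μ := by
    intro i j hij
    by_contra hne
    set g : Fin m → ℝ := (f j ⟨0, hm⟩) • f i - (f i ⟨0, hm⟩) • f j with hg
    have hgeig : T.mulVec g = μ i • g := by
      rw [hg, Matrix.mulVec_sub, Matrix.mulVec_smul, Matrix.mulVec_smul, heig, heig, ← hij,
        smul_sub, smul_comm (f j ⟨0, hm⟩), smul_comm (f i ⟨0, hm⟩)]
    have hg0 : g ⟨0, hm⟩ = 0 := by simp [hg]; ring
    have hgz : g = 0 := tridiag_zero hm T hoff hsup (μ i) g hgeig hg0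
    have hdot : g ⬝ᵥ f i = f j ⟨0, hm⟩ := by
      rw [hg, sub_dotProduct, smul_dotProduct, smul_dotProduct,
        hON i i, hON j i]
      simp [hne, Ne.symm hne]
    rw [hgz] at hdot
    simp at hdot
    exact hfirst (μ j) (f j) (heig j) (hfne j) hdot.symm
  -- every eigenvalue is some μ i
  have hmem : ∀ (ρ : ℝ) (x : Fin m → ℝ), x ≠ 0 → T.mulVec x = ρ • x → ∃ i, μ i = ρ := by
    intro ρ x hxne hx
    have hex : ∃ i, f i ⬝ᵥ x ≠ 0 := by
      by_contra hall
      push_neg at hall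
      apply hxne
      have hrepr := hH.eigenvectorBasis.sum_repr' ((WithLp.equiv 2 (Fin m → ℝ)).symm x)
      have : ∀ i, (inner ℝ (hH.eigenvectorBasis i) ((WithLp.equiv 2 (Fin m → ℝ)).symm x) : ℝ) = 0 := by
        intro i
        rw [PiLp.inner_apply]
        simpa [dotProduct, hf, mul_comm] using hall i
      rw [Finset.sum_congr rfl (fun i _ => by rw [this i, zero_smul])] at hrepr
      simpa using (congrArg (WithLp.equiv 2 (Fin m → ℝ)) hrepr).symm
    obtain ⟨i, hi⟩ := hex
    refine ⟨i, ?_⟩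
    have h1 : f i ⬝ᵥ T.mulVec x = ρ * (f i ⬝ᵥ x) := by
      rw [hx, dotProduct_smul]; rfl
    have h2 : f i ⬝ᵥ T.mulVec x = μ i * (f i ⬝ᵥ x) := by
      rw [Matrix.dotProduct_mulVec, ← hsymT, Matrix.vecMul_transpose, heig,
        smul_dotProduct]
      rfl
    have := h2.symm.trans h1
    rcases mul_eq_mul_right_iff.mp this with h | h
    · exact h
    · exact absurd h hi
  -- sign-flip matrix D
  set D : Matrix (Fin m) (Fin m) ℝ := Matrix.diagonal (fun i : Fin m => (-1:ℝ)^(i:ℕ)) with hD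
  have hDD : D * D = 1 := by
    rw [hD, Matrix.diagonal_mul_diagonal]
    have he : (fun i : Fin m => (-1:ℝ)^(i:ℕ) * (-1:ℝ)^(i:ℕ)) = fun _ => (1:ℝ) := by
      funext i; rw [← pow_add]; exact Even.neg_one_pow ⟨(i:ℕ), rfl⟩
    rw [he, Matrix.diagonal_one]
  have hDTD : D * T * D = (2*lamBar) • (1 : Matrix (Fin m) (Fin m) ℝ) - T := by
    ext i j
    rw [hD, Matrix.mul_diagonal, Matrix.diagonal_mul]
    simp only [Matrix.sub_apply, Matrix.smul_apply, Matrix.one_apply, smul_eq_mul]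
    have hsgn : ∀ (hodd : Odd ((i:ℕ)+(j:ℕ))),
        (-1:ℝ)^(i:ℕ) * T i j * (-1:ℝ)^(j:ℕ) = - T i j := by
      intro hodd
      have : (-1:ℝ)^(i:ℕ) * (-1:ℝ)^(j:ℕ) = -1 := by
        rw [← pow_add]; exact Odd.neg_one_pow hodd
      calc (-1:ℝ)^(i:ℕ) * T i j * (-1:ℝ)^(j:ℕ)
          = ((-1:ℝ)^(i:ℕ) * (-1:ℝ)^(j:ℕ)) * T i j := by ring
        _ = - T i j := by rw [this]; ring
    have hTji : T i j = T j i := (congrFun (congrFun hsymT i) j).symm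
    rcases Nat.lt_trichotomy (i:ℕ) (j:ℕ) with h | h | h
    · have hne : ¬ (i = j) := fun e => by simp [e] at h
      rw [if_neg hne]
      rcases Nat.lt_or_ge ((i:ℕ)+1) (j:ℕ) with h2 | h2
      · rw [hoff i j h2]; ring
      · have : Odd ((i:ℕ)+(j:ℕ)) := ⟨(i:ℕ), by omega⟩
        rw [hsgn this]; ring
    · have he : i = j := Fin.ext h
      rw [if_pos he, he, hdiagT j]
      have : (-1:ℝ)^(j:ℕ) * lamBar * (-1:ℝ)^(j:ℕ) = ((-1:ℝ)^(j:ℕ) * (-1:ℝ)^(j:ℕ)) * lamBar := by ring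
      rw [this, ← pow_add, Even.neg_one_pow ⟨(j:ℕ), rfl⟩]; ring
    · have hne : ¬ (i = j) := fun e => by simp [e] at h
      rw [if_neg hne]
      rcases Nat.lt_or_ge ((j:ℕ)+1) (i:ℕ) with h2 | h2
      · rw [hTji, hoff j i h2]; ring
      · have : Odd ((i:ℕ)+(j:ℕ)) := ⟨(j:ℕ), by omega⟩
        rw [hsgn this]; ring
  have hDeig : ∀ (ρ : ℝ) (x : Fin m → ℝ), T.mulVec x = ρ • x →
      T.mulVec (D.mulVec x) = (2*lamBar - ρ) • (D.mulVec x) := by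
    intro ρ x hx
    have h1 : T * D = D * ((2*lamBar) • (1 : Matrix (Fin m) (Fin m) ℝ) - T) := by
      calc T * D = (D * D) * (T * D) := by rw [hDD, one_mul]
        _ = D * (D * T * D) := by rw [Matrix.mul_assoc, ← Matrix.mul_assoc D T D, ← Matrix.mul_assoc]
        _ = D * ((2*lamBar) • (1 : Matrix (Fin m) (Fin m) ℝ) - T) := by rw [hDTD]
    calc T.mulVec (D.mulVec x) = (T * D).mulVec x := Matrix.mulVec_mulVec x T D
      _ = D.mulVec ((((2*lamBar) • (1 : Matrix (Fin m) (Fin m) ℝ) - T)).mulVec x) := by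
          rw [h1, ← Matrix.mulVec_mulVec]
      _ = D.mulVec ((2*lamBar) • x - ρ • x) := by
          rw [Matrix.sub_mulVec, hx, Matrix.smul_mulVec, Matrix.one_mulVec]
      _ = (2*lamBar - ρ) • D.mulVec x := by rw [← sub_smul, Matrix.mulVec_smul]
  have hDne : ∀ x : Fin m → ℝ, x ≠ 0 → D.mulVec x ≠ 0 := by
    intro x hx hz
    apply hx
    have hrec : D.mulVec (D.mulVec x) = x := by
      rw [Matrix.mulVec_mulVec, hDD, Matrix.one_mulVec]
    rw [← hrec, hz, Matrix.mulVec_zero]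
  -- sorting the eigenvalues
  set σp := Tuple.sort μ with hσp
  set θ : Fin m → ℝ := μ ∘ σp with hθ
  have hθmono : Monotone θ := Tuple.monotone_sort μ
  have hθinj : Function.Injective θ := hμinj.comp σp.injective
  have hθsm : StrictMono θ := hθmono.strictMono_of_injective hθinj
  set s : Finset ℝ := Finset.image μ Finset.univ with hs
  have hcard : s.card = m := by
    rw [hs, Finset.card_image_of_injective _ hμinj, Finset.card_univ, Fintype.card_fin]
  have hθmem : ∀ k, θ k ∈ s := fun k => Finset.mem_image_of_mem μ (Finset.mem_univ _)
  have hθeq := Finset.orderEmbOfFin_unique hcard hθmem hθsm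
  set w : Fin m → Fin m → ℝ := fun k => f (σp k) with hw
  have heigw : ∀ k, T.mulVec (w k) = θ k • w k := fun k => heig (σp k)
  have hwfne : ∀ k, w k ≠ 0 := fun k => hfne (σp k)
  have hONw : ∀ k l, w k ⬝ᵥ w l = if k = l then 1 else 0 := by
    intro k l
    rw [hw]
    simp only []
    rw [hON (σp k) (σp l)]
    simp [Equiv.apply_eq_iff_eq]
  set ψ : Fin m → ℝ := fun k => 2*lamBar - θ k.rev with hψ
  have hψsm : StrictMono ψ := by
    intro k l hkl
    have : θ l.rev < θ k.rev := hθsm (Fin.rev_lt_rev.mpr hkl)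
    simp only [hψ]; linarith
  have hψmem : ∀ k, ψ k ∈ s := by
    intro k
    have h1 := hDeig (θ k.rev) (w k.rev) (heigw k.rev)
    obtain ⟨i, hi⟩ := hmem _ _ (hDne _ (hwfne k.rev)) h1
    simp only [hψ]
    rw [← hi]
    exact Finset.mem_image_of_mem μ (Finset.mem_univ i)
  have hψeq := Finset.orderEmbOfFin_unique hcard hψmem hψsm
  have hθψ : ∀ k, θ k + θ k.rev = 2*lamBar := by
    intro k
    have h := congrFun (hθeq.trans hψeq.symm) k
    simp only [hψ] at h
    linarith
  -- equal weights
  have hwt : ∀ k : Fin m, (w k ⟨0,hm⟩)^2 = (w k.rev ⟨0,hm⟩)^2 := by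
    intro k
    set x := w k with hx
    set y := w k.rev with hy
    set dx := D.mulVec x with hdx
    have hdxeig : T.mulVec dx = θ k.rev • dx := by
      have h := hDeig (θ k) x (heigw k)
      rw [show 2*lamBar - θ k = θ k.rev by linarith [hθψ k]] at h
      exact h
    have hyeig : T.mulVec y = θ k.rev • y := heigw k.rev
    set g : Fin m → ℝ := (y ⟨0,hm⟩) • dx - (dx ⟨0,hm⟩) • y with hg2
    have hgeig : T.mulVec g = θ k.rev • g := by
      rw [hg2, Matrix.mulVec_sub, Matrix.mulVec_smul, Matrix.mulVec_smul, hdxeig, hyeig,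
        smul_sub, smul_comm (y ⟨0,hm⟩), smul_comm (dx ⟨0,hm⟩)]
    have hg0 : g ⟨0,hm⟩ = 0 := by simp [hg2]; ring
    have hgz := tridiag_zero hm T hoff hsup _ g hgeig hg0
    rw [hg2] at hgz
    have heqv : (y ⟨0,hm⟩) • dx = (dx ⟨0,hm⟩) • y := sub_eq_zero.mp hgz
    have hnorm := congrArg (fun z => z ⬝ᵥ z) heqv
    simp only [smul_dotProduct, dotProduct_smul, smul_eq_mul] at hnorm
    have hdxx : dx ⬝ᵥ dx = x ⬝ᵥ x := by
      rw [hdx, hD]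
      simp only [dotProduct, Matrix.mulVec_diagonal]
      apply Finset.sum_congr rfl
      intro i _
      rw [mul_mul_mul_comm, ← pow_add, Even.neg_one_pow ⟨(i:ℕ), rfl⟩, one_mul]
    have hxx : x ⬝ᵥ x = 1 := by rw [hx, hONw k k, if_pos rfl]
    have hyy : y ⬝ᵥ y = 1 := by rw [hy, hONw k.rev k.rev, if_pos rfl]
    have hdx0 : dx ⟨0,hm⟩ = x ⟨0,hm⟩ := by
      rw [hdx, hD, Matrix.mulVec_diagonal]
      norm_num
    rw [hdxx, hxx, hyy, hdx0] at hnorm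
    nlinarith [hnorm]
  exact ⟨θ, w, hθmono, heigw, hONw, fun k => ⟨hθψ k, hwt k⟩⟩

lemma lanczos_part1 (n m : ℕ) (hm : 1 ≤ m) (hmn : m ≤ n)
    (Q : Matrix (Fin n) (Fin n) ℝ) (hQ : Qᵀ * Q = 1)
    (lam : Fin n → ℝ) (hmono : Monotone lam)
    (lamBar : ℝ) (hsym : ∀ j : Fin n, lam j + lam j.rev = 2 * lamBar)
    (A : Matrix (Fin n) (Fin n) ℝ) (hA : A = Q * Matrix.diagonal lam * Qᵀ)
    (v : Fin n → ℝ) (hv : v ⬝ᵥ v = 1)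
    (hpal : ∀ i : Fin n, |(Qᵀ.mulVec v) i| = |(Qᵀ.mulVec v) i.rev|) :
    ∃ S : Matrix (Fin n) (Fin n) ℝ, Sᵀ = S ∧ S * S = 1 ∧
      S * A * S = (2*lamBar) • (1 : Matrix (Fin n) (Fin n) ℝ) - A ∧ S.mulVec v = v := by
  classical
  set μv : Fin n → ℝ := Qᵀ.mulVec v with hμv
  have hzero : ∀ j : Fin n, μv j.rev = 0 → μv j = 0 := by
    intro j h; have h2 := hpal j; rw [h] at h2; simpa using h2
  set ε : Fin n → ℝ := fun j => if μv j.rev = 0 then 1 else μv j / μv j.rev with hε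
  have hsq : ∀ j, μv j * μv j = μv j.rev * μv j.rev := by
    intro j
    have h2 := congrArg (fun t => t*t) (hpal j)
    simpa [abs_mul_abs_self] using h2
  have hε2 : ∀ j, ε j * ε j = 1 := by
    intro j
    rw [hε]; simp only
    split_ifs with h
    · norm_num
    · rw [div_mul_div_comm, hsq j, div_self (mul_ne_zero h h)]
  have hεμ : ∀ j, ε j * μv j.rev = μv j := by
    intro j
    rw [hε]; simp only
    split_ifs with h
    · rw [h, hzero j h]; ring
    · field_simp
  have hεrev : ∀ j, ε j.rev = ε j := by
    intro j
    rw [hε]; simp only [Fin.rev_rev]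
    by_cases h : μv j.rev = 0
    · rw [if_pos (hzero j h), if_pos h]
    · have hj : μv j ≠ 0 := fun hh => h (hzero j.rev (by rwa [Fin.rev_rev]))
      rw [if_neg hj, if_neg h, div_eq_div_iff hj h]
      exact (hsq j).symm
  set P : Matrix (Fin n) (Fin n) ℝ := Matrix.of (fun i j => if j = i.rev then ε i else 0) with hP
  have hPapp : ∀ i j, P i j = if j = i.rev then ε i else 0 := fun i j => rfl
  have hPP : P * P = 1 := by
    ext i j
    rw [Matrix.mul_apply, Finset.sum_eq_single i.rev]
    · rw [hPapp, hPapp, if_pos rfl, Fin.rev_rev]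
      by_cases h : j = i
      · rw [if_pos h, Matrix.one_apply, if_pos h.symm, hεrev, hε2]
      · rw [if_neg h, Matrix.one_apply, if_neg (Ne.symm h), mul_zero]
    · intro k _ hk; rw [hPapp, if_neg hk, zero_mul]
    · intro h; exact absurd (Finset.mem_univ _) h
  have hPt : Pᵀ = P := by
    ext i j
    rw [Matrix.transpose_apply, hPapp, hPapp]
    by_cases h : j = i.rev
    · have h2 : i = j.rev := by rw [h, Fin.rev_rev]
      rw [if_pos h2, if_pos h, h, hεrev]
    · have h2 : ¬ (i = j.rev) := fun hh => h (by rw [hh, Fin.rev_rev])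
      rw [if_neg h2, if_neg h]
  have hPμ : P.mulVec μv = μv := by
    funext i
    rw [Matrix.mulVec, dotProduct, Finset.sum_eq_single i.rev]
    · rw [hPapp, if_pos rfl]; exact hεμ i
    · intro j _ hj; rw [hPapp, if_neg hj, zero_mul]
    · intro h; exact absurd (Finset.mem_univ _) h
  have hPdiag : P * Matrix.diagonal lam = Matrix.diagonal (fun j => 2*lamBar - lam j) * P := by
    ext i j
    rw [Matrix.mul_diagonal, Matrix.diagonal_mul, hPapp]
    by_cases h : j = i.rev
    · rw [if_pos h, h]
      have hl : lam i.rev = 2*lamBar - lam i := by linarith [hsym i]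
      rw [hl]; ring
    · rw [if_neg h]; ring
  set S : Matrix (Fin n) (Fin n) ℝ := Q * P * Qᵀ with hS
  have hQQt : Q * Qᵀ = 1 := mul_eq_one_comm.mp hQ
  have hSt : Sᵀ = S := by
    rw [hS, Matrix.transpose_mul, Matrix.transpose_mul, Matrix.transpose_transpose, hPt,
      ← Matrix.mul_assoc]
  have hSS : S * S = 1 := by
    rw [hS]
    calc Q * P * Qᵀ * (Q * P * Qᵀ) = Q * (P * (Qᵀ * Q * (P * Qᵀ))) := by
          simp only [Matrix.mul_assoc]
      _ = Q * (P * (P * Qᵀ)) := by rw [hQ, Matrix.one_mul]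
      _ = Q * (P * P) * Qᵀ := by simp only [Matrix.mul_assoc]
      _ = Q * Qᵀ := by rw [hPP, Matrix.mul_one]
      _ = 1 := hQQt
  have hdiag2 : Matrix.diagonal (fun j : Fin n => 2*lamBar - lam j)
      = (2*lamBar) • (1 : Matrix (Fin n) (Fin n) ℝ) - Matrix.diagonal lam := by
    ext i j
    by_cases h : i = j
    · subst h; simp
    · simp [Matrix.diagonal_apply_ne _ h, Matrix.one_apply_ne h]
  have hSAS : S * A * S = (2*lamBar) • (1 : Matrix (Fin n) (Fin n) ℝ) - A := by
    rw [hS, hA]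
    calc Q * P * Qᵀ * (Q * Matrix.diagonal lam * Qᵀ) * (Q * P * Qᵀ)
        = Q * (P * (Qᵀ * Q * (Matrix.diagonal lam * (Qᵀ * Q * (P * Qᵀ))))) := by
          simp only [Matrix.mul_assoc]
      _ = Q * (P * (Matrix.diagonal lam * (P * Qᵀ))) := by rw [hQ, Matrix.one_mul, Matrix.one_mul]
      _ = Q * ((P * Matrix.diagonal lam) * P) * Qᵀ := by simp only [Matrix.mul_assoc]
      _ = Q * (Matrix.diagonal (fun j => 2*lamBar - lam j) * (P * P)) * Qᵀ := by
          rw [hPdiag]; simp only [Matrix.mul_assoc]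
      _ = Q * Matrix.diagonal (fun j => 2*lamBar - lam j) * Qᵀ := by
          rw [hPP, Matrix.mul_one]
      _ = (2*lamBar) • (1 : Matrix (Fin n) (Fin n) ℝ) - Q * Matrix.diagonal lam * Qᵀ := by
          rw [hdiag2, Matrix.mul_sub, Matrix.sub_mul, Matrix.mul_smul, Matrix.mul_one,
            Matrix.smul_mul, hQQt]
  have hSv : S.mulVec v = v := by
    rw [hS, ← Matrix.mulVec_mulVec, ← Matrix.mulVec_mulVec, ← hμv, hPμ, hμv,
      Matrix.mulVec_mulVec, hQQt, Matrix.one_mulVec]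
  exact ⟨S, hSt, hSS, hSAS, hSv⟩

lemma lanczos_part2 (n m : ℕ) (hm : 1 ≤ m)
    (lamBar : ℝ)
    (A : Matrix (Fin n) (Fin n) ℝ)
    (v : Fin n → ℝ)
    (S : Matrix (Fin n) (Fin n) ℝ) (hSt : Sᵀ = S) (hSS : S * S = 1)
    (hSAS : S * A * S = (2*lamBar) • (1 : Matrix (Fin n) (Fin n) ℝ) - A)
    (hSv : S.mulVec v = v)
    (vv u : ℕ → Fin n → ℝ) (a b : ℕ → ℝ)
    (hv1 : vv 1 = v)
    (hunit : ∀ k, 1 ≤ k → k ≤ m → vv k ⬝ᵥ vv k = 1)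
    (ha : ∀ k, 1 ≤ k → k ≤ m → a k = vv k ⬝ᵥ A.mulVec (vv k))
    (hu2 : u 2 = A.mulVec (vv 1) - a 1 • vv 1)
    (hu : ∀ k, 2 ≤ k → k + 1 ≤ m →
      u (k + 1) = A.mulVec (vv k) - a k • vv k - b (k - 1) • vv (k - 1))
    (hvk : ∀ k, 1 ≤ k → k + 1 ≤ m → vv (k + 1) = (b k)⁻¹ • u (k + 1)) :
    ∀ k, 1 ≤ k → k ≤ m → a k = lamBar := by
  have hSA : S * A = ((2*lamBar) • (1 : Matrix (Fin n) (Fin n) ℝ) - A) * S := by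
    calc S * A = S * A * (S * S) := by rw [hSS, Matrix.mul_one]
      _ = (S * A * S) * S := by simp only [Matrix.mul_assoc]
      _ = ((2*lamBar) • (1 : Matrix (Fin n) (Fin n) ℝ) - A) * S := by rw [hSAS]
  have hSAv : ∀ x : Fin n → ℝ,
      S.mulVec (A.mulVec x) = (2*lamBar) • S.mulVec x - A.mulVec (S.mulVec x) := by
    intro x
    rw [Matrix.mulVec_mulVec, hSA, ← Matrix.mulVec_mulVec, Matrix.sub_mulVec,
      Matrix.smul_mulVec, Matrix.one_mulVec]
  have key : ∀ (x : Fin n → ℝ) (c : ℝ), x ⬝ᵥ x = 1 → S.mulVec x = c • x → c * c = 1 →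
      x ⬝ᵥ A.mulVec x = lamBar := by
    intro x c hx hSx hc
    have h1 : x ⬝ᵥ ((S * A * S).mulVec x) = x ⬝ᵥ A.mulVec x := by
      have e1 : (S * A * S).mulVec x = c • (S.mulVec (A.mulVec x)) := by
        rw [← Matrix.mulVec_mulVec, hSx, Matrix.mulVec_smul, ← Matrix.mulVec_mulVec]
      have e2 : x ⬝ᵥ S.mulVec (A.mulVec x) = c * (x ⬝ᵥ A.mulVec x) := by
        rw [Matrix.dotProduct_mulVec x S _, ← hSt, Matrix.vecMul_transpose, hSx,
          smul_dotProduct, smul_eq_mul]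
      rw [e1, dotProduct_smul, smul_eq_mul, e2, ← mul_assoc, hc, one_mul]
    have h2 : x ⬝ᵥ ((S * A * S).mulVec x) = 2*lamBar - x ⬝ᵥ A.mulVec x := by
      rw [hSAS, Matrix.sub_mulVec, Matrix.smul_mulVec, Matrix.one_mulVec,
        dotProduct_sub, dotProduct_smul, hx, smul_eq_mul, mul_one]
    linarith [h1.symm.trans h2]
  have hsign : ∀ k, 1 ≤ k → k ≤ m → S.mulVec (vv k) = ((-1:ℝ))^(k+1) • vv k := by
    intro k
    induction k using Nat.strong_induction_on with
    | _ k ih =>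
      intro hk1 hkm
      rcases k with _ | k1
      · omega
      rcases k1 with _ | j
      · rw [hv1, hSv]
        norm_num
      · -- k = j + 2, written j+1+1
        have hs1 : S.mulVec (vv (j+1)) = ((-1:ℝ))^(j+1+1) • vv (j+1) :=
          ih (j+1) (by omega) (by omega) (by omega)
        set c : ℝ := ((-1:ℝ))^(j+1+1) with hc
        have hcc : c * c = 1 := by
          rw [hc, ← pow_add]; exact Even.neg_one_pow ⟨j+1+1, rfl⟩
        have ha1 : a (j+1) = lamBar := by
          rw [ha (j+1) (by omega) (by omega)]
          exact key (vv (j+1)) c (hunit (j+1) (by omega) (by omega)) hs1 hcc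
        have hcgoal : ((-1:ℝ))^(j+1+1+1) = -c := by rw [hc, pow_succ]; ring
        have hgoal : S.mulVec (u (j+1+1)) = (-c) • u (j+1+1) := by
          rcases j with _ | i
          · simp only [show (0:ℕ)+1 = 1 from rfl, show (0:ℕ)+1+1 = 2 from rfl] at *
            rw [hu2, Matrix.mulVec_sub, Matrix.mulVec_smul, hSAv, hs1, ha1,
              Matrix.mulVec_smul]
            module
          · have hs0 : S.mulVec (vv (i+1)) = ((-1:ℝ))^(i+1+1) • vv (i+1) :=
              ih (i+1) (by omega) (by omega) (by omega)
            have hsc0 : ((-1:ℝ))^(i+1+1) = -c := by rw [hc, pow_succ]; ring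
            rw [hsc0] at hs0
            have hurec := hu (i+1+1) (by omega) (by omega)
            simp only [Nat.add_sub_cancel] at hurec
            rw [hurec, Matrix.mulVec_sub, Matrix.mulVec_sub, Matrix.mulVec_smul,
              Matrix.mulVec_smul, hSAv, hs1, hs0, ha1, Matrix.mulVec_smul]
            module
        have hvs := hvk (j+1) (by omega) (by omega)
        rw [hvs, Matrix.mulVec_smul, hgoal, hcgoal, smul_comm]
  intro k hk1 hkm
  rw [ha k hk1 hkm]
  exact key (vv k) _ (hunit k hk1 hkm) (hsign k hk1 hkm)
    (by rw [← pow_add]; exact Even.neg_one_pow ⟨k+1, rfl⟩)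

/-- Main theorem: if `A = QΛQᵀ` has eigenvalues symmetric about `λ̄` and
`μ = Qᵀv` is an absolute palindrome, then the Ritz values (eigenvalues of the
Jacobi matrix `T_m` of the `m`-step Lanczos method) are symmetric about `λ̄`,
and the quadrature weights of symmetric pairs of nodes are equal: there is a
nondecreasing listing `θ_1 ≤ … ≤ θ_m` of the eigenvalues of `T_m` with
orthonormal eigenvectors `w_1, …, w_m` such that `θ_k + θ_{m+1-k} = 2λ̄` and
`((w_k)_1)² = ((w_{m+1-k})_1)²` for all `k`. -/
theorem stmt13 (n m : ℕ) (hm : 1 ≤ m) (hmn : m ≤ n)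
    (Q : Matrix (Fin n) (Fin n) ℝ) (hQ : Qᵀ * Q = 1)
    (lam : Fin n → ℝ) (hmono : Monotone lam)
    (lamBar : ℝ) (hsym : ∀ j : Fin n, lam j + lam j.rev = 2 * lamBar)
    (A : Matrix (Fin n) (Fin n) ℝ) (hA : A = Q * Matrix.diagonal lam * Qᵀ)
    (v : Fin n → ℝ) (hv : v ⬝ᵥ v = 1)
    (hpal : AbsPalindrome (Qᵀ.mulVec v))
    -- the Lanczos recurrence (1-based indexing `k = 1, …, m`)
    (vv u : ℕ → Fin n → ℝ) (a b : ℕ → ℝ)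
    (hv1 : vv 1 = v)
    (hunit : ∀ k, 1 ≤ k → k ≤ m → vv k ⬝ᵥ vv k = 1)
    (ha : ∀ k, 1 ≤ k → k ≤ m → a k = vv k ⬝ᵥ A.mulVec (vv k))
    (hu2 : u 2 = A.mulVec (vv 1) - a 1 • vv 1)
    (hu : ∀ k, 2 ≤ k → k + 1 ≤ m →
      u (k + 1) = A.mulVec (vv k) - a k • vv k - b (k - 1) • vv (k - 1))
    (hb : ∀ k, 1 ≤ k → k + 1 ≤ m → b k = Real.sqrt (u (k + 1) ⬝ᵥ u (k + 1)))
    (hbne : ∀ k, 1 ≤ k → k + 1 ≤ m → b k ≠ 0)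
    (hvk : ∀ k, 1 ≤ k → k + 1 ≤ m → vv (k + 1) = (b k)⁻¹ • u (k + 1))
    -- the Jacobi matrix `T_m`
    (T : Matrix (Fin m) (Fin m) ℝ)
    (hT : ∀ i j : Fin m, T i j =
      if (i : ℕ) = (j : ℕ) then a ((i : ℕ) + 1)
      else if (i : ℕ) + 1 = (j : ℕ) then b ((i : ℕ) + 1)
      else if (j : ℕ) + 1 = (i : ℕ) then b ((j : ℕ) + 1)
      else 0) :
    ∃ (θ : Fin m → ℝ) (w : Fin m → Fin m → ℝ),
      Monotone θ ∧
      (∀ k : Fin m, T.mulVec (w k) = θ k • w k) ∧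
      (∀ k l : Fin m, w k ⬝ᵥ w l = if k = l then 1 else 0) ∧
      (∀ k : Fin m, θ k + θ k.rev = 2 * lamBar ∧
        (w k ⟨0, hm⟩) ^ 2 = (w k.rev ⟨0, hm⟩) ^ 2) := by
  classical
  obtain ⟨S, hSt, hSS, hSAS, hSv⟩ := lanczos_part1 n m hm hmn Q hQ lam hmono lamBar hsym
    A hA v hv (fun i => hpal i)
  have halam := lanczos_part2 n m hm lamBar A v S hSt hSS hSAS hSv vv u a b hv1 hunit ha
    hu2 hu hvk
  have hoff : ∀ i j : Fin m, (i:ℕ)+1 < (j:ℕ) → T i j = 0 := by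
    intro i j h
    rw [hT, if_neg (by omega : ¬((i:ℕ) = (j:ℕ))), if_neg (by omega : ¬((i:ℕ)+1 = (j:ℕ))),
      if_neg (by omega : ¬((j:ℕ)+1 = (i:ℕ)))]
  have hsup : ∀ i j : Fin m, (i:ℕ)+1 = (j:ℕ) → T i j ≠ 0 := by
    intro i j h
    rw [hT, if_neg (by omega : ¬((i:ℕ) = (j:ℕ))), if_pos h]
    exact hbne ((i:ℕ)+1) (by omega) (by have := j.isLt; omega)
  have hsymT : Tᵀ = T := by
    ext i j
    rw [Matrix.transpose_apply, hT, hT]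
    by_cases e1 : (i:ℕ) = (j:ℕ)
    · rw [if_pos e1.symm, if_pos e1, e1]
    · by_cases e2 : (i:ℕ)+1 = (j:ℕ)
      · rw [if_neg (Ne.symm e1), if_neg (by omega : ¬((j:ℕ)+1 = (i:ℕ))), if_pos e2,
          if_neg e1, if_pos e2]
      · by_cases e3 : (j:ℕ)+1 = (i:ℕ)
        · rw [if_neg (Ne.symm e1), if_pos e3, if_neg e1, if_neg e2, if_pos e3]
        · rw [if_neg (Ne.symm e1), if_neg e3, if_neg e2, if_neg e1, if_neg e2, if_neg e3]
  have hdiagT : ∀ i : Fin m, T i i = lamBar := by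
    intro i
    rw [hT, if_pos rfl]
    exact halam ((i:ℕ)+1) (by omega) i.isLt
  exact jacobi_sym hm lamBar T hoff hsup hsymT hdiagT
end

section
/- Let κ > 1 be a real number, let ρ = (√κ + 1)/(√κ − 1), and define m* = log(1 + ρ⁻¹)/(2 log ρ). Then (√κ − 1)²/(8√κ) ≤ m* ≤ (√κ − 1)/4. -/
/-- Bounds on the iteration gap `m* = log(1 + ρ⁻¹)/(2 log ρ)` with
`ρ = (√κ + 1)/(√κ - 1)`: `(√κ - 1)²/(8√κ) ≤ m* ≤ (√κ - 1)/4`. -/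
theorem stmt15 (κ : ℝ) (hκ : 1 < κ) (ρ : ℝ)
    (hρ : ρ = (Real.sqrt κ + 1) / (Real.sqrt κ - 1))
    (mstar : ℝ) (hm : mstar = Real.log (1 + ρ⁻¹) / (2 * Real.log ρ)) :
    (Real.sqrt κ - 1) ^ 2 / (8 * Real.sqrt κ) ≤ mstar ∧
    mstar ≤ (Real.sqrt κ - 1) / 4 := by
  set s := Real.sqrt κ with hsdef
  have hs : 1 < s := by
    have : (1 : ℝ) < Real.sqrt κ := by
      rw [show (1:ℝ) = Real.sqrt 1 by simp]
      exact Real.sqrt_lt_sqrt (by norm_num) hκ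
    exact this
  have hs1 : 0 < s - 1 := by linarith
  have hs2 : 0 < s + 1 := by linarith
  set t : ℝ := (s - 1) / (s + 1) with htdef
  have ht0 : 0 < t := div_pos hs1 hs2
  have ht1 : t < 1 := by
    rw [htdef, div_lt_one hs2]; linarith
  have hρt : ρ = t⁻¹ := by
    rw [hρ, htdef, inv_div]
  have hρinv : ρ⁻¹ = t := by rw [hρt, inv_inv]
  have hρ1 : 1 < ρ := by
    rw [hρt]
    exact one_lt_inv_iff₀.mpr ⟨ht0, ht1⟩
  have hlogρ : 0 < Real.log ρ := Real.log_pos hρ1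
  -- log bounds
  have h1 : Real.log (1 + t) ≤ t := by
    have := Real.log_le_sub_one_of_pos (by linarith : (0:ℝ) < 1 + t)
    linarith
  have h2 : t / (1 + t) ≤ Real.log (1 + t) := by
    have := Real.log_le_sub_one_of_pos (x := (1 + t)⁻¹) (by positivity)
    rw [Real.log_inv] at this
    have h1t : (0:ℝ) < 1 + t := by linarith
    have : -Real.log (1 + t) ≤ (1 + t)⁻¹ - 1 := this
    have hineq : 1 - (1 + t)⁻¹ ≤ Real.log (1 + t) := by linarith
    have : 1 - (1 + t)⁻¹ = t / (1 + t) := by field_simp; ring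
    linarith
  have h3 : Real.log ρ ≤ (1 - t) / t := by
    have := Real.log_le_sub_one_of_pos (x := t⁻¹) (by positivity)
    rw [hρt]
    have : t⁻¹ - 1 = (1 - t) / t := by field_simp
    linarith [Real.log_le_sub_one_of_pos (x := t⁻¹) (by positivity : (0:ℝ) < t⁻¹)]
  have h4 : 1 - t ≤ Real.log ρ := by
    have := Real.log_le_sub_one_of_pos ht0
    rw [hρt, Real.log_inv]
    linarith
  rw [hm, hρinv]
  constructor
  · -- lower bound
    have key : (t / (1 + t)) / (2 * ((1 - t) / t)) ≤ Real.log (1 + t) / (2 * Real.log ρ) := by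
      apply div_le_div₀ (by linarith [Real.log_pos (by linarith : (1:ℝ) < 1 + t)]) h2
      · positivity
      · linarith
    have heq : (t / (1 + t)) / (2 * ((1 - t) / t)) = (s - 1) ^ 2 / (8 * s) := by
      rw [htdef]
      have h8 : (0:ℝ) < s := by linarith
      field_simp
      ring
    linarith [key, heq ▸ key]
  · -- upper bound
    have key : Real.log (1 + t) / (2 * Real.log ρ) ≤ t / (2 * (1 - t)) := by
      apply div_le_div₀ (le_of_lt ht0) h1
      · linarith
      · linarith
    have h1t : 1 - t = 2 / (s + 1) := by
      rw [htdef]; field_simp; ring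
    have heq : t / (2 * (1 - t)) = (s - 1) / 4 := by
      rw [h1t, htdef, div_eq_div_iff (by positivity) (by norm_num : (4:ℝ) ≠ 0)]
      ring
    linarith
end
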